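/- Let (f₁, f₀) : H• → G• be a strict morphism of crossed modules. Let H₀ act on G₁ on the right by g · x := g^{f₀(x)}, and let E = H₀ ⋉ G₁ be the corresponding semidirect product with multiplication (x, g)(x', g') = (x x', g^{f₀(x')} g'). Define π : E → H₀, (x,g) ↦ x; ι : G₁ → E, g ↦ (1, g); κ : H₁ → E, h ↦ (∂_H h, f₁(h)⁻¹); and j : E → G₀, (x, g) ↦ f₀(x) ∂_G(g). Then [H•, E, G•] with these maps is a butterfly: κ, ι, π, j are group homomorphisms, π ∘ κ = ∂_H, j ∘ ι = ∂_G, j ∘ κ = 1, π is surjective, ι is injective with ker π = ι(G₁), and the equivariance conditions ι(g^{j(e)}) = e⁻¹ ι(g) e and κ(h^{π(e)}) = e⁻¹ κ(h) e hold. -/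

import Mathlib

def SDP (A B : Type*) : Type _ := A × B

namespace SDP

variable {A B : Type*}

def mk (a : A) (b : B) : SDP A B := (a, b)

def fst (p : SDP A B) : A := Prod.fst p

def snd (p : SDP A B) : B := Prod.snd p

theorem ext {p q : SDP A B} (h1 : p.fst = q.fst) (h2 : p.snd = q.snd) : p = q :=
  Prod.ext h1 h2

end SDP

/-- The "right-style" semidirect product group structure on `A × B`, with
multiplication `(x, g)(x', g') = (x x', ρ(g)(x') g')`, where `ρ` is a right
action of `A` on `B` by automorphisms. -/
def sdpGroup {A B : Type*} [Group A] [Group B] (ρ : B → A → B)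
    (h1 : ∀ g, ρ g 1 = g) (h2 : ∀ g x y, ρ g (x * y) = ρ (ρ g x) y)
    (h3 : ∀ g g' x, ρ (g * g') x = ρ g x * ρ g' x) : Group (SDP A B) where
  mul p q := SDP.mk (p.fst * q.fst) (ρ p.snd q.fst * q.snd)
  one := SDP.mk 1 1
  inv p := SDP.mk p.fst⁻¹ (ρ p.snd⁻¹ p.fst⁻¹)
  mul_assoc p q r := SDP.ext (mul_assoc _ _ _) (by
      show ρ (ρ p.snd q.fst * q.snd) r.fst * r.snd =
        ρ p.snd (q.fst * r.fst) * (ρ q.snd r.fst * r.snd)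
      rw [h3, h2, mul_assoc])
  one_mul p := SDP.ext (one_mul _) (by
      show ρ (1 : B) p.fst * p.snd = p.snd
      have key : ρ (1 : B) p.fst = 1 := by
        have h := h3 1 1 p.fst
        rw [one_mul] at h
        exact (left_eq_mul.mp h)
      rw [key, one_mul])
  mul_one p := SDP.ext (mul_one _) (by
      show ρ p.snd (1 : A) * 1 = p.snd
      rw [h1, mul_one])
  inv_mul_cancel p := SDP.ext (inv_mul_cancel _) (by
      show ρ (ρ p.snd⁻¹ p.fst⁻¹) p.fst * p.snd = 1
      rw [← h2, inv_mul_cancel, h1, inv_mul_cancel])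


theorem stmt_14 {H₁ H₀ G₁ G₀ E : Type*} [Group H₁] [Group H₀] [Group G₁] [Group G₀] [Group E]
    (dH : H₁ →* H₀) (actH : H₁ → H₀ → H₁)
    (hH_one : ∀ g, actH g 1 = g)
    (hH_mul : ∀ g x y, actH g (x * y) = actH (actH g x) y)
    (hH_hom : ∀ g g' x, actH (g * g') x = actH g x * actH g' x)
    (hH_d : ∀ g x, dH (actH g x) = x⁻¹ * dH g * x)
    (hH_peiffer : ∀ g h, actH g (dH h) = h⁻¹ * g * h)
    (dG : G₁ →* G₀) (actG : G₁ → G₀ → G₁)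
    (hG_one : ∀ g, actG g 1 = g)
    (hG_mul : ∀ g x y, actG g (x * y) = actG (actG g x) y)
    (hG_hom : ∀ g g' x, actG (g * g') x = actG g x * actG g' x)
    (hG_d : ∀ g x, dG (actG g x) = x⁻¹ * dG g * x)
    (hG_peiffer : ∀ g h, actG g (dG h) = h⁻¹ * g * h)
    (f₁ : H₁ →* G₁) (f₀ : H₀ →* G₀)
    (hcomm : ∀ h, f₀ (dH h) = dG (f₁ h))
    (hequiv : ∀ h x, f₁ (actH h x) = actG (f₁ h) (f₀ x)) :
    letI : Group (SDP H₀ G₁) :=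
      sdpGroup (fun g x => actG g (f₀ x))
        (by intro g; show actG g (f₀ 1) = g; rw [map_one]; exact hG_one g)
        (by intro g x y; show actG g (f₀ (x * y)) = actG (actG g (f₀ x)) (f₀ y)
            rw [map_mul]; exact hG_mul g _ _)
        (by intro g g' x; exact hG_hom g g' (f₀ x))
    let π' : SDP H₀ G₁ → H₀ := SDP.fst
    let ι' : G₁ → SDP H₀ G₁ := fun g => SDP.mk 1 g
    let κ' : H₁ → SDP H₀ G₁ := fun h => SDP.mk (dH h) (f₁ h)⁻¹
    let j' : SDP H₀ G₁ → G₀ := fun p => f₀ p.fst * dG p.snd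
    (∀ h h', κ' (h * h') = κ' h * κ' h') ∧
      (∀ g g', ι' (g * g') = ι' g * ι' g') ∧
      (∀ p q, π' (p * q) = π' p * π' q) ∧
      (∀ p q, j' (p * q) = j' p * j' q) ∧
      (∀ h, π' (κ' h) = dH h) ∧
      (∀ g, j' (ι' g) = dG g) ∧
      (∀ h, j' (κ' h) = 1) ∧
      Function.Surjective π' ∧
      Function.Injective ι' ∧
      (∀ p, π' p = 1 ↔ ∃ g, ι' g = p) ∧
      (∀ g e, ι' (actG g (j' e)) = e⁻¹ * ι' g * e) ∧
      (∀ h e, κ' (actH h (π' e)) = e⁻¹ * κ' h * e) := by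
  
  intro π' ι' κ' j'
  letI inst : Group (SDP H₀ G₁) :=
    sdpGroup (fun g x => actG g (f₀ x))
      (by intro g; show actG g (f₀ 1) = g; rw [map_one]; exact hG_one g)
      (by intro g x y; show actG g (f₀ (x * y)) = actG (actG g (f₀ x)) (f₀ y)
          rw [map_mul]; exact hG_mul g _ _)
      (fun g g' x => hG_hom g g' (f₀ x))
  have act_one : ∀ x : G₀, actG (1 : G₁) x = 1 := by
    intro x
    have h := hG_hom 1 1 x
    rw [one_mul] at h
    exact left_eq_mul.mp h
  have act_inv : ∀ (g : G₁) (x : G₀), actG g⁻¹ x = (actG g x)⁻¹ := by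
    intro g x
    have h := hG_hom g g⁻¹ x
    rw [mul_inv_cancel, act_one] at h
    exact (inv_eq_of_mul_eq_one_right h.symm).symm
  have mul_def : ∀ p q : SDP H₀ G₁,
      p * q = SDP.mk (p.fst * q.fst) (actG p.snd (f₀ q.fst) * q.snd) := fun _ _ => rfl
  have inv_def : ∀ p : SDP H₀ G₁,
      p⁻¹ = SDP.mk p.fst⁻¹ (actG p.snd⁻¹ (f₀ p.fst⁻¹)) := fun _ => rfl
  have mk_fst : ∀ (a : H₀) (b : G₁), (SDP.mk a b).fst = a := fun _ _ => rfl
  have mk_snd : ∀ (a : H₀) (b : G₁), (SDP.mk a b).snd = b := fun _ _ => rfl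
  refine ⟨?_, ?_, ?_, ?_, ?_, ?_, ?_, ?_, ?_, ?_, ?_, ?_⟩
  · intro h h'
    show SDP.mk (dH (h * h')) (f₁ (h * h'))⁻¹ = _
    rw [mul_def]
    apply SDP.ext
    · simp [κ', mk_fst]
    · simp only [κ', mk_fst, mk_snd, map_mul, mul_inv_rev, hcomm, act_inv, hG_peiffer]
      group
  · intro g g'
    show SDP.mk 1 (g * g') = _
    rw [mul_def]
    apply SDP.ext
    · simp [ι', mk_fst]
    · simp [ι', mk_fst, mk_snd, map_one, hG_one]
  · intro p q
    rw [mul_def]; simp [π', SDP.fst, SDP.mk]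
  · intro p q
    rw [mul_def]
    show f₀ (p.fst * q.fst) * dG (actG p.snd (f₀ q.fst) * q.snd) =
      (f₀ p.fst * dG p.snd) * (f₀ q.fst * dG q.snd)
    rw [map_mul, map_mul, hG_d]
    group
  · intro h
    rfl
  · intro g
    show f₀ 1 * dG g = dG g
    rw [map_one, one_mul]
  · intro h
    show f₀ (dH h) * dG (f₁ h)⁻¹ = 1
    rw [hcomm, map_inv, mul_inv_cancel]
  · intro x
    exact ⟨SDP.mk x 1, rfl⟩
  · intro g g' h
    have := congrArg SDP.snd h
    simpa [ι', mk_snd] using this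
  · intro p
    constructor
    · intro hp
      exact ⟨p.snd, SDP.ext (by simpa [π', ι', mk_fst] using hp.symm) (by simp [ι', mk_snd])⟩
    · rintro ⟨g, rfl⟩
      rfl
  · intro g e
    show SDP.mk 1 (actG g (f₀ e.fst * dG e.snd)) = e⁻¹ * SDP.mk 1 g * e
    rw [inv_def, mul_def, mul_def]
    apply SDP.ext
    · simp [mk_fst]
    · simp only [mk_snd, mk_fst, map_one, hG_one, hG_hom, map_inv]
      rw [← hG_mul, inv_mul_cancel, hG_one, hG_mul, hG_peiffer]
  · intro h e
    show SDP.mk (dH (actH h e.fst)) (f₁ (actH h e.fst))⁻¹ =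
      e⁻¹ * SDP.mk (dH h) (f₁ h)⁻¹ * e
    rw [inv_def, mul_def, mul_def]
    apply SDP.ext
    · simp only [mk_fst, hH_d]
    · simp only [mk_snd, mk_fst, hequiv, hG_hom, map_inv, map_mul]
      rw [← hG_mul, ← hG_mul, hcomm]
      have key : (f₀ e.fst)⁻¹ * dG (f₁ h) * f₀ e.fst = dG (actG (f₁ h) (f₀ e.fst)) := by
        rw [hG_d]
      rw [← mul_assoc, key, hG_peiffer, act_inv]
      group
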